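/- arXiv:1206.1992 — 2 statements merged into one kernel-verified Lean document; each statement's English description precedes it below -/
import Mathlib

section
/- For every integer m ≥ 0, Σ_{l=1}^{m+1} (−1)^{l−1} (1 − 2^l) s(m+1, l) B_l / l = (−1)^m m! / 2^{m+1}, where s(m+1,l) are Stirling numbers of the first kind and B_l are Bernoulli numbers. -/
open Finset Nat PowerSeries

/-- Signed Stirling numbers of the first kind, defined by
`x(x−1)⋯(x−m) = Σ_{l=0}^{m+1} s(m+1,l) x^l`. -/
def stirling1 : ℕ → ℕ → ℤ
  | 0, 0 => 1
  | 0, _ + 1 => 0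
  | n + 1, 0 => -(n : ℤ) * stirling1 n 0
  | n + 1, k + 1 => stirling1 n k - (n : ℤ) * stirling1 n (k + 1)

namespace Stmt13Aux

def g (n : ℕ) : ℚ := (1 - 2 ^ n) * bernoulli n

noncomputable def h (p : ℕ) : ℚ := (-1) ^ p * g (p + 1) / (p + 1)

noncomputable def gps : PowerSeries ℚ :=
  bernoulliPowerSeries ℚ - PowerSeries.rescale 2 (bernoulliPowerSeries ℚ)

lemma exp_sub_one_ne : exp ℚ - 1 ≠ 0 := by
  intro h
  have := congrArg (PowerSeries.coeff 1) h
  simp [coeff_exp] at this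

lemma gps_mul : gps * (exp ℚ + 1) = X := by
  have h1 : bernoulliPowerSeries ℚ * (exp ℚ - 1) = X :=
    bernoulliPowerSeries_mul_exp_sub_one ℚ
  apply mul_right_cancel₀ exp_sub_one_ne
  have h2 : (rescale (2:ℚ)) (bernoulliPowerSeries ℚ * (exp ℚ - 1)) = rescale (2:ℚ) X := by
    rw [h1]
  rw [map_mul, map_sub, map_one, rescale_X] at h2
  have he2 : rescale (2:ℚ) (exp ℚ) = exp ℚ ^ 2 := by
    rw [exp_pow_eq_rescale_exp]; norm_num
  rw [he2] at h2
  have expand : gps * (exp ℚ + 1) * (exp ℚ - 1) = gps * (exp ℚ ^ 2 - 1) := by ring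
  rw [expand, gps, sub_mul, h2]
  have : bernoulliPowerSeries ℚ * (exp ℚ ^ 2 - 1)
      = X * (exp ℚ + 1) := by
    calc bernoulliPowerSeries ℚ * (exp ℚ ^ 2 - 1)
        = bernoulliPowerSeries ℚ * (exp ℚ - 1) * (exp ℚ + 1) := by ring
      _ = X * (exp ℚ + 1) := by rw [h1]
  rw [this]
  have hC : C (2:ℚ) * X = X + X := by
    have : (2:ℚ) = 1 + 1 := by norm_num
    rw [this, map_add, map_one]; ring
  rw [hC]
  ring

lemma coeff_gps (n : ℕ) : PowerSeries.coeff n gps = g n / n.factorial := by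
  simp [gps, bernoulliPowerSeries, coeff_rescale, g]
  ring

lemma g_zero : g 0 = 0 := by simp [g]
lemma g_one : g 1 = 1 / 2 := by norm_num [g, bernoulli_one]
lemma g_odd {n : ℕ} (ho : Odd n) (hn : 1 < n) : g n = 0 := by
  rw [g, bernoulli_eq_bernoulli'_of_ne_one (by omega), bernoulli'_eq_zero_of_odd ho hn, mul_zero]

lemma g_rec (n : ℕ) :
    ∑ i ∈ range (n + 1), (n.choose i : ℚ) * g i + g n = if n = 1 then 1 else 0 := by
  have h := congrArg (PowerSeries.coeff n) gps_mul
  rw [coeff_X, PowerSeries.coeff_mul, Nat.sum_antidiagonal_eq_sum_range_succ_mk] at h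
  have hfac : ∀ m : ℕ, (m.factorial : ℚ) ≠ 0 := fun m => by exact_mod_cast m.factorial_ne_zero
  have key : (n.factorial : ℚ) * (∑ k ∈ range n.succ,
      (PowerSeries.coeff k) gps * (PowerSeries.coeff (n - k)) (exp ℚ + 1))
      = ∑ i ∈ range (n + 1), (n.choose i : ℚ) * g i + g n := by
    rw [mul_sum]
    have : ∀ k ∈ range (n+1), (n.factorial : ℚ) *
        ((PowerSeries.coeff k) gps * (PowerSeries.coeff (n - k)) (exp ℚ + 1))
        = (n.choose k : ℚ) * g k + if k = n then g n else 0 := by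
      intro k hk
      rw [mem_range] at hk
      have hk' : k ≤ n := Nat.lt_succ_iff.mp hk
      rw [coeff_gps, map_add, coeff_exp, PowerSeries.coeff_one]
      rcases eq_or_ne k n with rfl | hne
      · simp only [Nat.sub_self, if_pos rfl, Nat.choose_self, Nat.cast_one, Nat.factorial_zero,
          Nat.cast_one]
        field_simp
        rw [map_one, if_pos trivial, if_pos trivial]; ring
      · have h2 : n - k ≠ 0 := Nat.sub_ne_zero_of_lt (lt_of_le_of_ne hk' hne)
        rw [if_neg h2, if_neg hne, add_zero, add_zero]
        have := Nat.choose_mul_factorial_mul_factorial hk'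
        have hch : (n.choose k : ℚ) = n.factorial / (k.factorial * (n-k).factorial) := by
          field_simp
          exact_mod_cast this
        rw [hch]
        field_simp
        rw [Algebra.algebraMap_self, RingHom.id_apply]; field_simp
    rw [Finset.sum_congr rfl this, Finset.sum_add_distrib, Finset.sum_ite_eq' (range (n+1)) n]
    simp
  rw [← key, h]
  rcases eq_or_ne n 1 with rfl | hn
  · simp
  · simp [hn]

lemma h_rec (p : ℕ) :
    h p + ∑ i ∈ range (p + 1), (p.choose i : ℚ) * h i = 1 := by
  have hp1 : ((p : ℚ) + 1) ≠ 0 := by positivity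
  have step1 : ∑ i ∈ range (p + 1), (p.choose i : ℚ) * h i
      = (-1 / (p+1)) * ∑ j ∈ range (p + 2), ((p+1).choose j : ℚ) * ((-1)^j * g j) := by
    rw [Finset.sum_range_succ' (fun j => ((p+1).choose j : ℚ) * ((-1)^j * g j)) (p+1)]
    rw [g_zero, mul_zero, mul_zero, add_zero, mul_sum]
    apply Finset.sum_congr rfl
    intro i _
    have hcn : (p+1).choose (i+1) * (i+1) = p.choose i * (p+1) := by
      rw [← Nat.add_one_mul_choose_eq]; ring
    have hc : ((p+1).choose (i+1) : ℚ) * ((i:ℚ)+1) = (p.choose i : ℚ) * ((p:ℚ)+1) := by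
      exact_mod_cast congrArg (Nat.cast : ℕ → ℚ) hcn
    have hi1 : ((i : ℚ) + 1) ≠ 0 := by positivity
    rw [h]
    field_simp
    linear_combination (-(-1:ℚ)^i * g (i+1)) * hc
  have hterm : ∀ j, ((-1 : ℚ))^j * g j = g j - (if j = 1 then 2 * g 1 else 0) := by
    intro j
    rcases Nat.even_or_odd j with he | ho
    · rw [he.neg_one_pow, one_mul, if_neg (by rintro rfl; exact (Nat.not_even_one) he), sub_zero]
    · rcases eq_or_ne j 1 with rfl | hj
      · rw [g_one]; norm_num
      · obtain ⟨k, rfl⟩ := ho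
        have : g (2*k+1) = 0 := g_odd ⟨k, by ring⟩ (by omega)
        rw [this, if_neg hj]; simp
  have step2 : ∑ j ∈ range (p + 2), ((p+1).choose j : ℚ) * ((-1)^j * g j)
      = (if p = 0 then 1 else 0) - g (p+1) - (p+1) := by
    have h2 : ∑ j ∈ range (p + 2), ((p+1).choose j : ℚ) * (if j = 1 then 2 * g 1 else 0)
        = (p+1 : ℚ) := by
      rw [Finset.sum_eq_single 1]
      · rw [g_one]; simp
      · intro b _ hb; simp [hb]
      · intro habs; exact absurd (by simp : 1 ∈ range (p+2)) habs
    have h3 : ∑ j ∈ range (p + 2), ((p+1).choose j : ℚ) * g j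
        = (if p = 0 then (1:ℚ) else 0) - g (p+1) := by
      have h4 := g_rec (p+1)
      have hif : (if p + 1 = 1 then (1:ℚ) else 0) = (if p = 0 then 1 else 0) := by
        rcases eq_or_ne p 0 with rfl | hp
        · simp
        · simp [hp]
      rw [hif] at h4; linarith
    calc ∑ j ∈ range (p + 2), ((p+1).choose j : ℚ) * ((-1)^j * g j)
        = (∑ j ∈ range (p + 2), ((p+1).choose j : ℚ) * g j)
            - ∑ j ∈ range (p + 2), ((p+1).choose j : ℚ) * (if j = 1 then 2 * g 1 else 0) := by
          rw [← Finset.sum_sub_distrib]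
          apply Finset.sum_congr rfl; intro j _; rw [hterm j]; ring
      _ = (if p = 0 then 1 else 0) - g (p+1) - (p+1) := by rw [h2, h3]
  rw [step1, step2, h]
  rcases eq_or_ne p 0 with rfl | hp
  · rw [g_one]; norm_num
  · rw [if_neg hp]
    rcases Nat.even_or_odd p with he | ho
    · obtain ⟨k, rfl⟩ := he
      have hk : k ≠ 0 := by rintro rfl; exact hp rfl
      have hg0 : g (k + k + 1) = 0 := g_odd ⟨k, by ring⟩ (by omega)
      rw [hg0]
      field_simp
      ring
    · rw [ho.neg_one_pow]
      field_simp
      ring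

lemma stirling1_zero_right : ∀ n, 1 ≤ n → stirling1 n 0 = 0 := by
  intro n hn
  induction n with
  | zero => omega
  | succ k ih =>
    rcases Nat.eq_zero_or_pos k with rfl | hk
    · simp [stirling1]
    · rw [stirling1, ih hk, mul_zero]

lemma stirling1_eq_zero_of_lt : ∀ n k, n < k → stirling1 n k = 0 := by
  intro n
  induction n with
  | zero => intro k hk; match k, hk with | (j+1), _ => rfl
  | succ m ih =>
    intro k hk
    match k, hk with
    | (j+1), hk =>
      rw [stirling1, ih j (by omega), ih (j+1) (by omega), mul_zero, sub_zero]

lemma stirling1_row_sum : ∀ n, ∑ l ∈ range (n + 1), stirling1 n l = if n ≤ 1 then 1 else 0 := by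
  intro n
  induction n with
  | zero => simp [stirling1]
  | succ m ih =>
    rw [Finset.sum_range_succ' (fun l => stirling1 (m+1) l) (m+1)]
    have h1 : ∀ i, stirling1 (m+1) (i+1) = stirling1 m i - (m : ℤ) * stirling1 m (i+1) := by
      intro i; rfl
    have h0 : stirling1 (m+1) 0 = -(m : ℤ) * stirling1 m 0 := rfl
    simp only [h1, h0]
    rw [Finset.sum_sub_distrib, ← Finset.mul_sum]
    have h2 : ∑ i ∈ range (m + 1), stirling1 m (i+1)
        = (∑ l ∈ range (m + 1), stirling1 m l) - stirling1 m 0 := by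
      rw [Finset.sum_range_succ' (fun l => stirling1 m l) m] at ih ⊢
      have : stirling1 m (m+1) = 0 := stirling1_eq_zero_of_lt m (m+1) (by omega)
      rw [Finset.sum_range_succ, this]
      ring
    rw [h2, ih]
    rcases Nat.lt_or_ge m 1 with hm | hm
    · have : m = 0 := by omega
      subst this
      norm_num [stirling1]
    · rcases Nat.eq_or_lt_of_le hm with h | h
      · have hm1 : m = 1 := h.symm
        subst hm1
        norm_num [stirling1]
      · rw [if_neg (by omega), if_neg (by omega)]
        ring

lemma stirling1_choose : ∀ m i, ∑ j ∈ range (m+1), stirling1 (m+1) (j+1) * (j.choose i : ℤ)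
    = stirling1 m i := by
  intro m
  induction m with
  | zero =>
    intro i
    cases i with
    | zero => simp [stirling1]
    | succ i => simp [stirling1]
  | succ m ih =>
    intro i
    have hrec : ∀ j, stirling1 (m+2) (j+1) = stirling1 (m+1) j - ((m:ℤ)+1) * stirling1 (m+1) (j+1) := by
      intro j; rw [stirling1]; push_cast; ring
    calc ∑ j ∈ range (m+2), stirling1 (m+2) (j+1) * (j.choose i : ℤ)
        = (∑ j ∈ range (m+2), stirling1 (m+1) j * (j.choose i : ℤ))
          - ((m:ℤ)+1) * ∑ j ∈ range (m+2), stirling1 (m+1) (j+1) * (j.choose i : ℤ) := by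
          rw [Finset.mul_sum, ← Finset.sum_sub_distrib]
          apply Finset.sum_congr rfl; intro j _; rw [hrec j]; ring
      _ = (∑ j ∈ range (m+2), stirling1 (m+1) j * (j.choose i : ℤ))
          - ((m:ℤ)+1) * stirling1 m i := by
          have hB : ∑ j ∈ range (m+2), stirling1 (m+1) (j+1) * (j.choose i : ℤ)
              = stirling1 m i := by
            rw [Finset.sum_range_succ (fun j => stirling1 (m+1) (j+1) * (j.choose i : ℤ)) (m+1),
              stirling1_eq_zero_of_lt (m+1) (m+2) (by omega), zero_mul, add_zero, ih i]
          rw [hB]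
      _ = stirling1 (m+1) i := by
          cases i with
          | zero =>
            have hA : ∑ j ∈ range (m+2), stirling1 (m+1) j * ((j.choose 0 : ℕ) : ℤ)
                = ∑ j ∈ range (m+2), stirling1 (m+1) j := by
              apply Finset.sum_congr rfl; intro j _; simp
            rw [hA, stirling1_row_sum (m+1)]
            rcases Nat.eq_zero_or_pos m with rfl | hm
            · simp [stirling1]
            · rw [if_neg (by omega), stirling1_zero_right m hm]
              have h0 : stirling1 (m+1) 0 = -(m : ℤ) * stirling1 m 0 := rfl
              rw [h0, stirling1_zero_right m hm]
              ring
          | succ i =>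
            have hA : ∑ j ∈ range (m+2), stirling1 (m+1) j * ((j.choose (i+1) : ℕ) : ℤ)
                = ∑ j ∈ range (m+1), stirling1 (m+1) (j+1) * ((j.choose i : ℤ) + (j.choose (i+1) : ℤ)) := by
              rw [Finset.sum_range_succ' (fun j => stirling1 (m+1) j * ((j.choose (i+1) : ℕ) : ℤ)) (m+1)]
              simp only [Nat.choose_succ_succ, Nat.choose_zero_succ, Nat.succ_eq_add_one,
                Nat.cast_zero, mul_zero, add_zero, Nat.cast_add]
            rw [hA]
            have : ∑ j ∈ range (m+1), stirling1 (m+1) (j+1) * ((j.choose i : ℤ) + (j.choose (i+1) : ℤ))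
                = stirling1 m i + stirling1 m (i+1) := by
              rw [← ih i, ← ih (i+1), ← Finset.sum_add_distrib]
              apply Finset.sum_congr rfl; intro j _; ring
            rw [this, stirling1]
            ring

noncomputable def S (m : ℕ) : ℚ := ∑ j ∈ range (m + 1), (stirling1 (m + 1) (j + 1) : ℚ) * h j

noncomputable def U (n : ℕ) : ℚ := ∑ i ∈ range (n + 1), (stirling1 n i : ℚ) * h i

lemma S_rec1 (m : ℕ) : S (m + 1) = U (m + 1) - ((m : ℚ) + 1) * S m := by
  have hrec : ∀ j, (stirling1 (m+2) (j+1) : ℚ)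
      = (stirling1 (m+1) j : ℚ) - ((m:ℚ)+1) * (stirling1 (m+1) (j+1) : ℚ) := by
    intro j
    rw [stirling1]
    push_cast
    ring
  have hS : ∑ j ∈ range (m+2), (stirling1 (m+1) (j+1) : ℚ) * h j = S m := by
    rw [Finset.sum_range_succ,
      stirling1_eq_zero_of_lt (m+1) (m+2) (by omega)]
    simp [S]
  calc S (m + 1)
      = ∑ j ∈ range (m+2), ((stirling1 (m+1) j : ℚ) * h j
          - ((m:ℚ)+1) * ((stirling1 (m+1) (j+1) : ℚ) * h j)) := by
        unfold S
        apply Finset.sum_congr rfl; intro j _; rw [hrec j]; ring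
    _ = U (m + 1) - ((m : ℚ) + 1) * S m := by
        rw [Finset.sum_sub_distrib, ← Finset.mul_sum, hS]
        rfl

lemma S_eq_negU (m : ℕ) (hm : 1 ≤ m) : S m = -U m := by
  have hsplit : S m = (∑ j ∈ range (m+1), (stirling1 (m+1) (j+1) : ℚ))
      - ∑ j ∈ range (m+1), (stirling1 (m+1) (j+1) : ℚ)
          * ∑ i ∈ range (j+1), (j.choose i : ℚ) * h i := by
    unfold S
    rw [← Finset.sum_sub_distrib]
    apply Finset.sum_congr rfl
    intro j _
    have := h_rec j
    have hh : h j = 1 - ∑ i ∈ range (j+1), (j.choose i : ℚ) * h i := by linarith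
    rw [hh]; ring
  have hzero : ∑ j ∈ range (m+1), (stirling1 (m+1) (j+1) : ℚ) = 0 := by
    have hz : ∑ j ∈ range (m+1), stirling1 (m+1) (j+1) = 0 := by
      have := stirling1_row_sum (m+1)
      rw [Finset.sum_range_succ' (fun l => stirling1 (m+1) l) (m+1)] at this
      rw [if_neg (by omega)] at this
      have h0 : stirling1 (m+1) 0 = 0 := stirling1_zero_right (m+1) (by omega)
      rw [h0, add_zero] at this
      exact this
    exact_mod_cast congrArg (Int.cast : ℤ → ℚ) hz
  have hextend : ∀ j ∈ range (m+1), (stirling1 (m+1) (j+1) : ℚ)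
        * ∑ i ∈ range (j+1), (j.choose i : ℚ) * h i
      = ∑ i ∈ range (m+1), (stirling1 (m+1) (j+1) : ℚ) * ((j.choose i : ℚ) * h i) := by
    intro j hj
    rw [mem_range] at hj
    rw [Finset.mul_sum]
    apply Finset.sum_subset
    · exact Finset.range_subset_range.mpr (by omega)
    · intro i _ hi
      rw [mem_range, not_lt] at hi
      rw [Nat.choose_eq_zero_of_lt (by omega)]
      simp
  have hswap : ∑ j ∈ range (m+1), ∑ i ∈ range (m+1),
        (stirling1 (m+1) (j+1) : ℚ) * ((j.choose i : ℚ) * h i) = U m := by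
    rw [Finset.sum_comm]
    unfold U
    apply Finset.sum_congr rfl
    intro i _
    have hcast : ∑ j ∈ range (m+1), (stirling1 (m+1) (j+1) : ℚ) * (j.choose i : ℚ)
        = (stirling1 m i : ℚ) := by
      exact_mod_cast congrArg (Int.cast : ℤ → ℚ) (stirling1_choose m i)
    calc ∑ j ∈ range (m+1), (stirling1 (m+1) (j+1) : ℚ) * ((j.choose i : ℚ) * h i)
        = (∑ j ∈ range (m+1), (stirling1 (m+1) (j+1) : ℚ) * (j.choose i : ℚ)) * h i := by
          rw [Finset.sum_mul]; apply Finset.sum_congr rfl; intro j _; ring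
      _ = (stirling1 m i : ℚ) * h i := by rw [hcast]
  rw [hsplit, hzero, Finset.sum_congr rfl hextend, hswap]
  ring

lemma S_zero : S 0 = 1 / 2 := by
  have : stirling1 1 1 = 1 := by rw [stirling1]; simp [stirling1]
  simp [S, this, h, g_one]

lemma S_formula (m : ℕ) : S m = (-1 : ℚ) ^ m * (Nat.factorial m) / 2 ^ (m + 1) := by
  induction m with
  | zero => simpa [Nat.factorial] using S_zero
  | succ m ih =>
    have h1 : S (m + 1) = U (m + 1) - ((m : ℚ) + 1) * S m := S_rec1 m
    have h2 : S (m + 1) = -U (m + 1) := S_eq_negU (m + 1) (by omega)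
    have h3 : 2 * S (m + 1) = -((m : ℚ) + 1) * S m := by linarith
    have hfact : ((m+1).factorial : ℚ) = ((m : ℚ) + 1) * (m.factorial : ℚ) := by
      rw [Nat.factorial_succ]; push_cast; ring
    rw [ih] at h3
    have h4 : S (m+1) = -((m : ℚ) + 1) * ((-1 : ℚ) ^ m * (Nat.factorial m) / 2 ^ (m + 1)) / 2 := by
      linarith
    rw [h4, hfact]
    rw [pow_succ (-1 : ℚ) m, pow_succ (2 : ℚ) (m+1)]
    field_simp

end Stmt13Aux

open Stmt13Aux in
theorem stmt_13 (m : ℕ) :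
    ∑ l ∈ Finset.Icc 1 (m + 1),
        (-1 : ℚ) ^ (l - 1) * (1 - 2 ^ l) * (stirling1 (m + 1) l : ℚ) * bernoulli l / l
      = (-1 : ℚ) ^ m * (Nat.factorial m) / 2 ^ (m + 1) := by
  rw [← S_formula]
  rw [← Finset.Ico_add_one_right_eq_Icc, Finset.sum_Ico_eq_sum_range]
  have hcount : m + 1 + 1 - 1 = m + 1 := by omega
  rw [hcount]
  unfold S
  apply Finset.sum_congr rfl
  intro j _
  have hsub : 1 + j - 1 = j := by omega
  rw [hsub, h, g]
  have hc : ((1 + j : ℕ) : ℚ) = (j : ℚ) + 1 := by push_cast; ring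
  rw [hc]
  have hj1 : ((j : ℚ) + 1) ≠ 0 := by positivity
  have hidx : 1 + j = j + 1 := by omega
  rw [hidx]
  field_simp
end

section
/- For Re(s) > 1, Hasse's formula holds: ζ(s)(1 − 2^{1−s}) = Σ_{m=0}^∞ 2^{−(m+1)} Σ_{j=0}^{m} (−1)^j C(m, j) / (j+1)^s, where the double series converges. -/
open Finset Complex

/-- The binomial generating sum: `∑_m C(m,j) (1/2)^(m+1) = 1`. -/
lemma key_choose_real (j : ℕ) :
    HasSum (fun m : ℕ => (m.choose j : ℝ) * (1 / 2) ^ (m + 1)) 1 := by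
  have hr : ‖(1 / 2 : ℝ)‖ < 1 := by rw [Real.norm_eq_abs]; rw [abs_of_pos] <;> norm_num
  have h := (hasSum_choose_mul_geometric_of_norm_lt_one j hr).mul_right ((1 / 2 : ℝ) ^ (j + 1))
  have h2 : HasSum (fun n : ℕ => ((n + j).choose j : ℝ) * (1 / 2) ^ (n + j + 1)) 1 := by
    have hfun : (fun n : ℕ => ((n + j).choose j : ℝ) * (1 / 2) ^ (n + j + 1)) =
        fun n : ℕ => ((n + j).choose j : ℝ) * (1 / 2) ^ n * (1 / 2) ^ (j + 1) := by
      funext n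
      rw [mul_assoc, ← pow_add]
      ring_nf
    have hval : (1 / (1 - 1 / 2 : ℝ) ^ (j + 1)) * (1 / 2) ^ (j + 1) = 1 := by
      rw [show (1 - 1 / 2 : ℝ) = 1 / 2 by norm_num]
      rw [one_div_mul_eq_div, div_self (by positivity)]
    rw [hval] at h
    rw [hfun]
    exact h
  refine (hasSum_nat_add_iff' j).mp ?_
  have hzero : ∑ i ∈ range j, ((i.choose j : ℝ)) * (1 / 2) ^ (i + 1) = 0 := by
    refine Finset.sum_eq_zero fun i hi => ?_
    rw [Finset.mem_range] at hi
    rw [Nat.choose_eq_zero_of_lt hi]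
    simp
  rw [hzero, sub_zero]
  exact h2

lemma key_choose_complex (j : ℕ) :
    HasSum (fun m : ℕ => (m.choose j : ℂ) * (1 / 2) ^ (m + 1)) 1 := by
  have := (key_choose_real j).map Complex.ofRealCLM Complex.continuous_ofReal
  simpa [Function.comp_def] using this

lemma summable_aux {s : ℂ} (hs : 1 < s.re) :
    Summable (fun n : ℕ => 1 / ((n : ℂ) + 1) ^ s) := by
  have : Summable (fun n : ℕ => 1 / ((n : ℂ)) ^ s) := by
    rwa [Complex.summable_one_div_nat_cpow]
  exact (summable_nat_add_iff 1).mpr this |>.congr fun n => by push_cast; ring_nf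

lemma hasSum_zeta' {s : ℂ} (hs : 1 < s.re) :
    HasSum (fun n : ℕ => 1 / ((n : ℂ) + 1) ^ s) (riemannZeta s) := by
  have h := (summable_aux hs).hasSum
  rwa [← zeta_eq_tsum_one_div_nat_add_one_cpow hs] at h

/-- the odd part: `∑_k 1/(2k+2)^s = 2^{-s} ζ(s)`. -/
lemma hasSum_odd {s : ℂ} (hs : 1 < s.re) :
    HasSum (fun k : ℕ => 1 / ((2 * k + 1 : ℕ) + 1 : ℂ) ^ s)
      ((2 : ℂ) ^ (-s) * riemannZeta s) := by
  have h := (hasSum_zeta' hs).mul_left ((2 : ℂ) ^ (-s))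
  refine h.congr_fun fun k => ?_
  have h2 : ((2 * k + 1 : ℕ) + 1 : ℂ) = ((2 : ℝ) : ℂ) * (((k : ℝ) + 1 : ℝ) : ℂ) := by
    push_cast; ring
  rw [h2, mul_cpow_ofReal_nonneg (by norm_num) (by positivity)]
  rw [Complex.cpow_neg]
  push_cast
  rw [mul_one_div]
  simp [div_eq_mul_inv, mul_inv, mul_comm]

lemma hasSum_eta {s : ℂ} (hs : 1 < s.re) :
    HasSum (fun n : ℕ => (-1 : ℂ) ^ n / ((n : ℂ) + 1) ^ s)
      (riemannZeta s * (1 - 2 ^ (1 - s))) := by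
  set f : ℕ → ℂ := fun n => 1 / ((n : ℂ) + 1) ^ s with hf
  have hsum : Summable f := summable_aux hs
  have hodd : HasSum (fun k => f (2 * k + 1)) ((2 : ℂ) ^ (-s) * riemannZeta s) := by
    exact (hasSum_odd hs).congr_fun fun k => by simp only [hf]
  have heven : HasSum (fun k => f (2 * k)) (∑' k, f (2 * k)) :=
    (hsum.comp_injective (fun a b h => by omega)).hasSum
  have htot := heven.even_add_odd hodd
  have hE : ∑' k, f (2 * k) = riemannZeta s - (2 : ℂ) ^ (-s) * riemannZeta s := by
    have := (hasSum_zeta' hs).unique htot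
    linear_combination -this
  rw [hE] at heven
  have hfun : (fun n : ℕ => (-1 : ℂ) ^ n / ((n : ℂ) + 1) ^ s) =
      fun n : ℕ => (-1 : ℂ) ^ n * f n := by
    funext n; rw [hf]; ring
  rw [hfun]
  have : HasSum (fun n : ℕ => (-1 : ℂ) ^ n * f n)
      (riemannZeta s - (2:ℂ) ^ (-s) * riemannZeta s + -((2:ℂ) ^ (-s) * riemannZeta s)) := by
    refine HasSum.even_add_odd ?_ ?_
    · exact heven.congr_fun fun k => by rw [pow_mul]; norm_num
    · exact hodd.neg.congr_fun fun k => by rw [pow_succ, pow_mul]; norm_num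
  convert this using 1
  have h21 : (2 : ℂ) ^ (1 - s) = 2 * (2 : ℂ) ^ (-s) := by
    rw [sub_eq_add_neg, Complex.cpow_add _ _ two_ne_zero, Complex.cpow_one]
  rw [h21]; ring

theorem stmt_15 (s : ℂ) (hs : 1 < s.re) :
    HasSum
      (fun m : ℕ => (1 / 2 ^ (m + 1) : ℂ) *
        ∑ j ∈ Finset.range (m + 1), (-1 : ℂ) ^ j * (Nat.choose m j) / ((j : ℂ) + 1) ^ s)
      (riemannZeta s * (1 - 2 ^ (1 - s))) := by
  set F : ℕ × ℕ → ℂ := fun p =>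
    ((-1 : ℂ) ^ p.1 * (p.2.choose p.1 : ℂ) / ((p.1 : ℂ) + 1) ^ s) * (1 / 2) ^ (p.2 + 1) with hF
  have hnorm : ∀ j m : ℕ, ‖F (j, m)‖ =
      ((m.choose j : ℝ) * (1 / 2) ^ (m + 1)) * ((j : ℝ) + 1) ^ (-s.re) := by
    intro j m
    have hjc : ((j : ℂ) + 1) = (((j : ℝ) + 1 : ℝ) : ℂ) := by push_cast; ring
    rw [hF]
    simp only [norm_mul, norm_div, norm_pow, norm_neg, norm_one, one_pow, one_mul]
    rw [hjc,
      Complex.norm_cpow_eq_rpow_re_of_pos (by positivity)]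
    rw [Real.rpow_neg (by positivity)]
    simp [Complex.norm_natCast, div_eq_mul_inv]
    ring
  have hnonneg : ∀ p : ℕ × ℕ, 0 ≤ ‖F p‖ := fun p => norm_nonneg _
  have hsumnorm : Summable (fun p : ℕ × ℕ => ‖F p‖) := by
    rw [summable_prod_of_nonneg hnonneg]
    constructor
    · intro j
      apply Summable.congr (((key_choose_real j).summable).mul_right (((j : ℝ) + 1) ^ (-s.re)))
      intro m
      rw [hnorm j m]
    · have key : ∀ j : ℕ, ∑' m, ‖F (j, m)‖ = ((j : ℝ) + 1) ^ (-s.re) := by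
        intro j
        rw [tsum_congr (fun m => hnorm j m), tsum_mul_right, (key_choose_real j).tsum_eq, one_mul]
      have hsummable : Summable (fun j : ℕ => ((j : ℝ) + 1) ^ (-s.re)) := by
        have h1 : Summable (fun j : ℕ => 1 / ((j : ℝ)) ^ s.re) :=
          Real.summable_one_div_nat_rpow.mpr hs
        have h2 := (summable_nat_add_iff 1).mpr h1
        apply h2.congr
        intro j
        rw [Real.rpow_neg (by positivity), ← one_div]
        push_cast
        ring_nf
      exact hsummable.congr fun j => (key j).symm
  have hFsum : Summable F := hsumnorm.of_norm
  have hFs : HasSum F (∑' p, F p) := hFsum.hasSum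
  -- column sums: for each j, sum over m
  have hrow : ∀ j : ℕ, HasSum (fun m => F (j, m)) ((-1 : ℂ) ^ j / ((j : ℂ) + 1) ^ s) := by
    intro j
    have h := (key_choose_complex j).mul_left ((-1 : ℂ) ^ j / ((j : ℂ) + 1) ^ s)
    rw [mul_one] at h
    apply h.congr_fun
    intro m
    rw [hF]
    ring
  have hcol : HasSum (fun j : ℕ => (-1 : ℂ) ^ j / ((j : ℂ) + 1) ^ s) (∑' p, F p) :=
    hFs.prod_fiberwise hrow
  have hT : ∑' p, F p = riemannZeta s * (1 - 2 ^ (1 - s)) := (hcol.unique (hasSum_eta hs))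
  -- swap the order
  have hswap : HasSum (fun q : ℕ × ℕ => F (q.2, q.1)) (∑' p, F p) := by
    have := (Equiv.prodComm ℕ ℕ).hasSum_iff (f := F) (a := ∑' p, F p)
    exact this.mpr hFs
  have hfib : ∀ m : ℕ, HasSum (fun j => F (j, m))
      ((1 / 2 ^ (m + 1) : ℂ) *
        ∑ j ∈ Finset.range (m + 1), (-1 : ℂ) ^ j * (Nat.choose m j : ℂ) / ((j : ℂ) + 1) ^ s) := by
    intro m
    have h0 : ∀ j ∉ Finset.range (m + 1), F (j, m) = 0 := by
      intro j hj
      rw [Finset.mem_range] at hj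
      rw [hF]
      simp only
      rw [Nat.choose_eq_zero_of_lt (by omega)]
      simp
    have h : HasSum (fun j => F (j, m)) _ := hasSum_sum_of_ne_finset_zero h0
    convert h using 1
    rw [Finset.mul_sum]
    refine Finset.sum_congr rfl fun j hj => ?_
    rw [hF]
    simp only
    rw [div_pow, one_pow]
    ring
  have := hswap.prod_fiberwise hfib
  rwa [hT] at this
end
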